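/- arXiv:2004.05542 — 2 statements merged into one kernel-verified Lean document; each statement's English description precedes it below -/
import Mathlib

section
/- Let $f(x|\theta) = \frac{1}{\theta}\mathbf{1}_{(0,\theta)}(x)$ be the uniform density family on $\Theta = (0,\infty)$ with respect to Lebesgue measure, and fix $G_0 = \sum_{i=1}^{k_0} p_i^0 \delta_{\theta_i^0} \in \mathcal{E}_{k_0}(\Theta)$ with distinct atoms and positive weights. Then $\liminf_{G \overset{W_1}{\to} G_0,\, G \in \mathcal{E}_{k_0}(\Theta)} \frac{V(P_G, P_{G_0})}{D_1(G,G_0)} > 0$, where $P_G$ has density $p_G(x) = \sum_i p_i f(x|\theta_i)$ and $V$ is total variation distance. -/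
open MeasureTheory
open scoped BigOperators

section helpers
open Finset
lemma eval_mix {k : ℕ} (w c : Fin k → ℝ) {x : ℝ} (hx : 0 < x) :
    ∑ i, w i * (Set.Ioo (0:ℝ) (c i)).indicator (fun _ => 1 / c i) x
      = ∑ i ∈ Finset.univ.filter (fun j => x < c j), w i / c i := by
  rw [Finset.sum_filter]
  refine Finset.sum_congr rfl fun i _ => ?_
  by_cases h : x < c i <;>
    simp [Set.indicator_apply, Set.mem_Ioo, hx, h, div_eq_mul_inv]

lemma interval_int_lb {f : ℝ → ℝ} (hf : Integrable f) {u v m : ℝ} (huv : u ≤ v)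
    (hm : ∀ x ∈ Set.Ioo u v, m ≤ |f x|) :
    m * (v - u) ≤ ∫ x in Set.Ioo u v, |f x| := by
  have h1 : ∫ _x in Set.Ioo u v, m ≤ ∫ x in Set.Ioo u v, |f x| :=
    setIntegral_mono_on (integrableOn_const measure_Ioo_lt_top.ne)
      hf.abs.integrableOn measurableSet_Ioo hm
  simpa [setIntegral_const, Real.volume_Ioo, ENNReal.toReal_ofReal (sub_nonneg.2 huv), max_eq_left (sub_nonneg.2 huv),
    mul_comm] using h1

lemma sum_setIntegral_abs_le {ι : Type*} [Fintype ι] (t : ι → Set ℝ)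
    (hmeas : ∀ i, MeasurableSet (t i)) (hdis : Pairwise (Function.onFun Disjoint t))
    {f : ℝ → ℝ} (hf : Integrable f) :
    ∑ i, ∫ x in t i, |f x| ≤ ∫ x, |f x| := by
  rw [← integral_iUnion_fintype hmeas hdis fun i => hf.abs.integrableOn]
  exact setIntegral_le_integral hf.abs (Filter.Eventually.of_forall fun x => abs_nonneg _)


set_option maxHeartbeats 3000000 in
lemma core_bound (k : ℕ) (hk : 1 ≤ k) (a : Fin k → ℝ) (ha : ∀ i, 0 < a i)
    (hainj : Function.Injective a) (p0 : Fin k → ℝ) (hp0 : ∀ i, 0 < p0 i)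
    (hp0s : ∑ i, p0 i = 1) :
    ∃ c > 0, ∃ r > 0, ∃ ε > 0, (∀ i j, i ≠ j → 2*r ≤ |a i - a j|) ∧ (∀ i, ε ≤ p0 i) ∧
      ∀ b P : Fin k → ℝ, (∀ i, 0 < b i) → (∀ i, 0 < P i) →
        (∀ i, |b i - a i| < r) → (∀ i, |P i - p0 i| < ε) →
        c * (∑ i, (|b i - a i| + |P i - p0 i|)) ≤
          (1/2) * ∫ x, |(∑ i, P i * (Set.Ioo (0:ℝ) (b i)).indicator (fun _ => 1/(b i)) x)
              - ∑ i, p0 i * (Set.Ioo (0:ℝ) (a i)).indicator (fun _ => 1/(a i)) x| ∂volume := by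
  have hnemp : Nonempty (Fin k) := ⟨⟨0, hk⟩⟩
  obtain ⟨iA, -, hiA⟩ := Finset.exists_max_image (univ : Finset (Fin k)) a univ_nonempty
  set A := a iA with hAdef
  have hApos : 0 < A := ha iA
  have haA : ∀ i, a i ≤ A := fun i => hiA i (mem_univ i)
  -- separation constant g
  set C : Finset ℝ := (univ.image a) ∪ ((univ.offDiag).image fun ij => |a ij.1 - a ij.2|)
    with hCdef
  have hCne : C.Nonempty := ⟨A, by
    simp only [hCdef, Finset.mem_union]
    exact Or.inl (Finset.mem_image_of_mem a (mem_univ iA))⟩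
  set g := C.min' hCne with hgdef
  have hCpos : ∀ y ∈ C, 0 < y := by
    intro y hy
    rcases Finset.mem_union.mp hy with h | h
    · obtain ⟨i, -, rfl⟩ := Finset.mem_image.mp h; exact ha i
    · obtain ⟨ij, hij, rfl⟩ := Finset.mem_image.mp h
      have : ij.1 ≠ ij.2 := (Finset.mem_offDiag.mp hij).2.2
      exact abs_pos.mpr (sub_ne_zero.mpr fun h => this (hainj h))
  have hgpos : 0 < g := hCpos g (C.min'_mem hCne)
  have hga : ∀ i, g ≤ a i := fun i =>
    C.min'_le _ (Finset.mem_union.mpr (Or.inl (Finset.mem_image_of_mem a (mem_univ i))))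
  have hgap : ∀ i j, i ≠ j → g ≤ |a i - a j| := by
    intro i j hij
    refine C.min'_le _ (Finset.mem_union.mpr (Or.inr ?_))
    exact Finset.mem_image.mpr ⟨(i, j), Finset.mem_offDiag.mpr ⟨mem_univ _, mem_univ _, hij⟩, rfl⟩
  -- weights lower bound
  obtain ⟨im, -, him⟩ := Finset.exists_min_image (univ : Finset (Fin k)) p0 univ_nonempty
  set pm := p0 im with hpmdef
  have hpm : 0 < pm := hp0 im
  have hpmle : ∀ i, pm ≤ p0 i := fun i => him i (mem_univ i)
  have hp0le1 : ∀ i, p0 i ≤ 1 :=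
    fun i => hp0s ▸ Finset.single_le_sum (fun j _ => (hp0 j).le) (mem_univ i)
  -- constants
  set r : ℝ := g / 8 with hrdef
  have hr : 0 < r := by positivity
  set ε : ℝ := pm / 2 with hεdef
  have hε : 0 < ε := by positivity
  set q1 : ℝ := pm / (4 * A) with hq1def
  have hq1 : 0 < q1 := by positivity
  set CD : ℝ := 2 * A + 1 + 1 / g with hCDdef
  have hCD : 0 < CD := by positivity
  set Dmax : ℝ := k * (r + ε) with hDmaxdef
  have hDmax : 0 < Dmax := by
    have : (1:ℝ) ≤ (k:ℝ) := by exact_mod_cast hk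
    nlinarith
  set c : ℝ := min ((min (2*r) (q1/2)) / (2*CD)) (r * q1 / (2 * Dmax)) with hcdef
  have hM'pos : 0 < min (2*r) (q1/2) := lt_min (by positivity) (by positivity)
  have hcpos : 0 < c := lt_min (by positivity) (by positivity)
  refine ⟨c, hcpos, r, hr, ε, hε, ?_, ?_, ?_⟩
  · intro i j hij
    have := hgap i j hij
    rw [hrdef]; linarith
  · intro i; rw [hεdef]; linarith [hpmle i]
  intro b P hb hP hbc hPc
  set f : ℝ → ℝ := fun x =>
    (∑ i, P i * (Set.Ioo (0:ℝ) (b i)).indicator (fun _ => 1/(b i)) x)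
      - ∑ i, p0 i * (Set.Ioo (0:ℝ) (a i)).indicator (fun _ => 1/(a i)) x with hfdef
  -- integrability
  have hfint : Integrable f := by
    have hone : ∀ (w : Fin k → ℝ) (cc : Fin k → ℝ), (∀ i, 0 < cc i) →
        Integrable (fun x => ∑ i, w i * (Set.Ioo (0:ℝ) (cc i)).indicator
          (fun _ => 1/(cc i)) x) := by
      intro w cc hcc
      refine integrable_finset_sum _ fun i _ => ?_
      exact (((integrable_indicator_iff measurableSet_Ioo).mpr
        (integrableOn_const measure_Ioo_lt_top.ne))).const_mul (w i)
    exact (hone P b hb).sub (hone p0 a ha)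
  -- basic bounds
  have hb1 : ∀ i, a i - r < b i ∧ b i < a i + r := by
    intro i; have := abs_lt.mp (hbc i); constructor <;> linarith [this.1, this.2]
  have hg8 : g = 8 * r := by rw [hrdef]; ring
  have haig : ∀ i, 8 * r ≤ a i := fun i => hg8 ▸ hga i
  have hrA : r ≤ A := by
    have := hga iA; rw [hrdef]; linarith
  have hbA : ∀ i, b i ≤ 2 * A := fun i => by linarith [(hb1 i).2, haA i, hrA]
  have hPlow : ∀ i, pm / 2 ≤ P i := by
    intro i
    have := abs_lt.mp (hPc i)
    have := hpmle i
    rw [hεdef] at *; linarith [this]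
  have hq : ∀ i, q1 ≤ P i / b i := by
    intro i
    rw [le_div_iff₀ (hb i), hq1def]
    have h1 := hbA i; have h2 := hPlow i; have h3 := hb i
    rw [div_mul_eq_mul_div, div_le_iff₀ (by positivity : (0:ℝ) < 4 * A)]
    nlinarith
  have hq0 : ∀ i, q1 ≤ p0 i / a i := by
    intro i
    rw [le_div_iff₀ (ha i), hq1def, div_mul_eq_mul_div,
      div_le_iff₀ (by positivity : (0:ℝ) < 4 * A)]
    nlinarith [haA i, hpmle i, hpm, ha i, hApos]
  have hq0up : ∀ i, p0 i / a i ≤ 1 / g := by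
    intro i
    rw [div_le_div_iff₀ (ha i) hgpos]
    nlinarith [hp0le1 i, hga i, hgpos, hp0 i]
  -- filter sets and step values
  set F : Fin k → Finset (Fin k) := fun i => univ.filter fun j => a i < a j with hFdef
  set G : Fin k → Finset (Fin k) := fun i => univ.filter fun j => a i ≤ a j with hGdef
  have hiF : ∀ i, i ∉ F i := by intro i; simp [hFdef]
  have hGF : ∀ i, G i = insert i (F i) := by
    intro i
    ext j
    simp only [hGdef, hFdef, Finset.mem_filter, Finset.mem_insert, mem_univ, true_and]
    constructor
    · intro h
      rcases eq_or_lt_of_le h with h | h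
      · exact Or.inl (hainj h.symm)
      · exact Or.inr h
    · rintro (rfl | h)
      · exact le_rfl
      · exact h.le
  set S : Fin k → ℝ := fun i => ∑ j ∈ F i, P j / b j with hSdef
  set S0 : Fin k → ℝ := fun i => ∑ j ∈ F i, p0 j / a j with hS0def
  set T : Fin k → ℝ := fun i => ∑ j ∈ G i, P j / b j with hTdef
  set T0 : Fin k → ℝ := fun i => ∑ j ∈ G i, p0 j / a j with hT0def
  have hTS : ∀ i, T i = P i / b i + S i := by
    intro i; rw [hTdef]; simp only; rw [hGF i, Finset.sum_insert (hiF i)]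
  have hTS0 : ∀ i, T0 i = p0 i / a i + S0 i := by
    intro i; rw [hT0def]; simp only; rw [hGF i, Finset.sum_insert (hiF i)]
  -- pointwise comparison of breakpoints
  have hiff : ∀ i j x, a i - 3*r < x → x < a i + 3*r → j ≠ i →
      ((x < b j ↔ a i < a j) ∧ (x < a j ↔ a i < a j)) := by
    intro i j x hx1 hx2 hji
    have hanej : a j ≠ a i := fun h => hji (hainj h)
    have hgapji := hgap i j (fun h => hji h.symm)
    have hbj := hb1 j
    rcases lt_or_gt_of_ne hanej with h | h
    · -- a j < a i
      have habs : |a i - a j| = a i - a j := abs_of_pos (by linarith)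
      rw [habs] at hgapji
      rw [hg8] at hgapji
      constructor
      · exact iff_of_false (not_lt.mpr (by linarith [hbj.2])) (not_lt.mpr h.le)
      · exact iff_of_false (not_lt.mpr (by linarith)) (not_lt.mpr h.le)
    · -- a i < a j
      have habs : |a i - a j| = a j - a i := by
        rw [abs_sub_comm]; exact abs_of_pos (by linarith)
      rw [habs, hg8] at hgapji
      constructor
      · exact iff_of_true (by linarith [hbj.1]) h
      · exact iff_of_true (by linarith) h
  -- evaluation on the left plateau
  have hevalL : ∀ i, ∀ x ∈ Set.Ioo (a i - 3*r) (a i - r), f x = T i - T0 i := by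
    intro i x hx
    obtain ⟨hx1, hx2⟩ := hx
    have hx0 : 0 < x := by linarith [haig i, hr]
    rw [hfdef]
    simp only
    rw [eval_mix P b hx0, eval_mix p0 a hx0]
    have e1 : univ.filter (fun j => x < b j) = G i := by
      rw [hGdef]
      refine Finset.filter_congr fun j _ => ?_
      by_cases hji : j = i
      · subst hji
        exact iff_of_true (by linarith [(hb1 j).1]) le_rfl
      · refine ((hiff i j x hx1 (by linarith) hji).1).trans ?_
        exact ⟨le_of_lt, fun h => lt_of_le_of_ne h fun he => hji (hainj he.symm)⟩
    have e2 : univ.filter (fun j => x < a j) = G i := by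
      rw [hGdef]
      refine Finset.filter_congr fun j _ => ?_
      by_cases hji : j = i
      · subst hji
        exact iff_of_true (by linarith) le_rfl
      · refine ((hiff i j x hx1 (by linarith) hji).2).trans ?_
        exact ⟨le_of_lt, fun h => lt_of_le_of_ne h fun he => hji (hainj he.symm)⟩
    rw [e1, e2]
  -- evaluation on the right plateau
  have hevalR : ∀ i, ∀ x ∈ Set.Ioo (a i + r) (a i + 3*r), f x = S i - S0 i := by
    intro i x hx
    obtain ⟨hx1, hx2⟩ := hx
    have hx0 : 0 < x := by linarith [haig i, hr]
    rw [hfdef]; simp only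
    rw [eval_mix P b hx0, eval_mix p0 a hx0]
    have e1 : univ.filter (fun j => x < b j) = F i := by
      rw [hFdef]
      refine Finset.filter_congr fun j _ => ?_
      by_cases hji : j = i
      · subst hji
        exact iff_of_false (not_lt.mpr (by linarith [(hb1 j).2])) (lt_irrefl _)
      · exact (hiff i j x (by linarith) hx2 hji).1
    have e2 : univ.filter (fun j => x < a j) = F i := by
      rw [hFdef]
      refine Finset.filter_congr fun j _ => ?_
      by_cases hji : j = i
      · subst hji
        exact iff_of_false (not_lt.mpr (by linarith)) (lt_irrefl _)
      · exact (hiff i j x (by linarith) hx2 hji).2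
    rw [e1, e2]
  -- evaluation on the middle (gap) interval
  have hevalK1 : ∀ i, a i < b i → ∀ x ∈ Set.Ioo (a i) (b i),
      f x = (S i - S0 i) + P i / b i := by
    intro i hab x hx
    obtain ⟨hx1, hx2⟩ := hx
    have hx0 : 0 < x := lt_trans (ha i) hx1
    have hbi := hb1 i
    rw [hfdef]; simp only
    rw [eval_mix P b hx0, eval_mix p0 a hx0]
    have e1 : univ.filter (fun j => x < b j) = G i := by
      rw [hGdef]
      refine Finset.filter_congr fun j _ => ?_
      by_cases hji : j = i
      · subst hji; exact iff_of_true hx2 le_rfl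
      · refine ((hiff i j x (by linarith) (by linarith [hbi.2]) hji).1).trans ?_
        exact ⟨le_of_lt, fun h => lt_of_le_of_ne h fun he => hji (hainj he.symm)⟩
    have e2 : univ.filter (fun j => x < a j) = F i := by
      rw [hFdef]
      refine Finset.filter_congr fun j _ => ?_
      by_cases hji : j = i
      · subst hji; exact iff_of_false (not_lt.mpr hx1.le) (lt_irrefl _)
      · exact (hiff i j x (by linarith) (by linarith [hbi.2]) hji).2
    rw [e1, e2, hGF i, Finset.sum_insert (hiF i)]
    show P i / b i + S i - S0 i = S i - S0 i + P i / b i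
    ring
  have hevalK2 : ∀ i, b i < a i → ∀ x ∈ Set.Ioo (b i) (a i),
      f x = (S i - S0 i) - p0 i / a i := by
    intro i hab x hx
    obtain ⟨hx1, hx2⟩ := hx
    have hx0 : 0 < x := lt_trans (hb i) hx1
    have hbi := hb1 i
    rw [hfdef]; simp only
    rw [eval_mix P b hx0, eval_mix p0 a hx0]
    have e1 : univ.filter (fun j => x < b j) = F i := by
      rw [hFdef]
      refine Finset.filter_congr fun j _ => ?_
      by_cases hji : j = i
      · subst hji; exact iff_of_false (not_lt.mpr hx1.le) (lt_irrefl _)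
      · exact (hiff i j x (by linarith [hbi.1]) (by linarith) hji).1
    have e2 : univ.filter (fun j => x < a j) = G i := by
      rw [hGdef]
      refine Finset.filter_congr fun j _ => ?_
      by_cases hji : j = i
      · subst hji; exact iff_of_true hx2 le_rfl
      · refine ((hiff i j x (by linarith [hbi.1]) (by linarith) hji).2).trans ?_
        exact ⟨le_of_lt, fun h => lt_of_le_of_ne h fun he => hji (hainj he.symm)⟩
    rw [e1, e2, hGF i, Finset.sum_insert (hiF i)]
    show S i - (p0 i / a i + S0 i) = S i - S0 i - p0 i / a i
    ring
  -- interval lower bounds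
  have hI0 : ∀ i, |T i - T0 i| * (2*r) ≤ ∫ x in Set.Ioo (a i - 3*r) (a i - r), |f x| := by
    intro i
    have h := interval_int_lb hfint (by linarith : a i - 3*r ≤ a i - r)
      (fun x hx => le_of_eq (by rw [hevalL i x hx]))
    have he : (a i - r) - (a i - 3*r) = 2*r := by ring
    rwa [he] at h
  have hI2 : ∀ i, |S i - S0 i| * (2*r) ≤ ∫ x in Set.Ioo (a i + r) (a i + 3*r), |f x| := by
    intro i
    have h := interval_int_lb hfint (by linarith : a i + r ≤ a i + 3*r)
      (fun x hx => le_of_eq (by rw [hevalR i x hx]))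
    have he : (a i + 3*r) - (a i + r) = 2*r := by ring
    rwa [he] at h
  have hI1 : ∀ i, max (q1 - |S i - S0 i|) 0 * |b i - a i| ≤
      ∫ x in Set.Ioo (min (a i) (b i)) (max (a i) (b i)), |f x| := by
    intro i
    rcases le_or_gt (q1 - |S i - S0 i|) 0 with hneg | hpos
    · rw [max_eq_right hneg, zero_mul]
      exact setIntegral_nonneg measurableSet_Ioo fun x _ => abs_nonneg _
    · rw [max_eq_left hpos.le]
      have h := interval_int_lb hfint (min_le_max : min (a i) (b i) ≤ max (a i) (b i))
        (m := q1 - |S i - S0 i|) ?_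
      · have he : max (a i) (b i) - min (a i) (b i) = |b i - a i| := by
          rw [max_sub_min_eq_abs, abs_sub_comm]
        rwa [he] at h
      · intro x hx
        rcases lt_trichotomy (a i) (b i) with hlt | heq | hgt
        · rw [min_eq_left hlt.le, max_eq_right hlt.le] at hx
          have heval := hevalK1 i hlt x hx
          have h2 := neg_abs_le (S i - S0 i)
          have h3 := hq i
          calc q1 - |S i - S0 i| ≤ (S i - S0 i) + P i / b i := by linarith
            _ = f x := heval.symm
            _ ≤ |f x| := le_abs_self _
        · exfalso
          rw [heq, min_self, max_self] at hx
          exact lt_irrefl (b i) (hx.1.trans hx.2)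
        · rw [min_eq_right hgt.le, max_eq_left hgt.le] at hx
          have heval := hevalK2 i hgt x hx
          have h2 := le_abs_self (S i - S0 i)
          have h3 := hq0 i
          calc q1 - |S i - S0 i| ≤ -((S i - S0 i) - p0 i / a i) := by linarith
            _ = -(f x) := by rw [heval]
            _ ≤ |f x| := neg_le_abs _
  -- family of disjoint intervals
  set t : Fin k × Fin 3 → Set ℝ := fun im =>
    ![Set.Ioo (a im.1 - 3*r) (a im.1 - r),
      Set.Ioo (min (a im.1) (b im.1)) (max (a im.1) (b im.1)),
      Set.Ioo (a im.1 + r) (a im.1 + 3*r)] im.2 with htdef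
  have ht0 : ∀ i, t (i, 0) = Set.Ioo (a i - 3*r) (a i - r) := fun i => rfl
  have ht1 : ∀ i, t (i, 1) = Set.Ioo (min (a i) (b i)) (max (a i) (b i)) := fun i => rfl
  have ht2 : ∀ i, t (i, 2) = Set.Ioo (a i + r) (a i + 3*r) := fun i => rfl
  have hmeas : ∀ im, MeasurableSet (t im) := by
    rintro ⟨i, m⟩
    fin_cases m <;> exact measurableSet_Ioo
  have hsub : ∀ im, t im ⊆ Set.Ioo (a im.1 - 3*r) (a im.1 + 3*r) := by
    rintro ⟨i, m⟩
    fin_cases m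
    · exact Set.Ioo_subset_Ioo le_rfl (by dsimp only; linarith)
    · refine Set.Ioo_subset_Ioo ?_ ?_ <;> dsimp only
      · exact le_min (by linarith) (by linarith [(hb1 i).1])
      · exact max_le (by linarith) (by linarith [(hb1 i).2])
    · exact Set.Ioo_subset_Ioo (by dsimp only; linarith) le_rfl
  have hball : ∀ i j, i ≠ j →
      Disjoint (Set.Ioo (a i - 3*r) (a i + 3*r)) (Set.Ioo (a j - 3*r) (a j + 3*r)) := by
    intro i j hij
    rw [Set.Ioo_disjoint_Ioo]
    have hgapij := hgap i j hij
    rw [hg8] at hgapij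
    rcases le_or_gt (a i) (a j) with h | h
    · have habs : |a i - a j| = a j - a i := by
        rw [abs_sub_comm]; exact abs_of_nonneg (by linarith)
      rw [habs] at hgapij
      exact le_trans (min_le_left _ _) (le_trans (by linarith) (le_max_right _ _))
    · have habs : |a i - a j| = a i - a j := abs_of_pos (by linarith)
      rw [habs] at hgapij
      exact le_trans (min_le_right _ _) (le_trans (by linarith) (le_max_left _ _))
  have hd01 : ∀ i, Disjoint (t (i,0)) (t (i,1)) := by
    intro i
    rw [ht0, ht1, Set.Ioo_disjoint_Ioo]
    exact le_trans (min_le_left _ _)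
      (le_trans (le_min (by linarith) (by linarith [(hb1 i).1])) (le_max_right _ _))
  have hd02 : ∀ i, Disjoint (t (i,0)) (t (i,2)) := by
    intro i
    rw [ht0, ht2, Set.Ioo_disjoint_Ioo]
    exact le_trans (min_le_left _ _) (le_trans (by linarith) (le_max_right _ _))
  have hd12 : ∀ i, Disjoint (t (i,1)) (t (i,2)) := by
    intro i
    rw [ht1, ht2, Set.Ioo_disjoint_Ioo]
    exact le_trans (min_le_left _ _)
      (le_trans (max_le (by linarith) (by linarith [(hb1 i).2])) (le_max_right _ _))
  have hdis : Pairwise (Function.onFun Disjoint t) := by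
    rintro ⟨i, m⟩ ⟨j, n⟩ hne
    simp only [Function.onFun]
    by_cases hij : i = j
    · subst hij
      have hmn : m ≠ n := fun h => hne (by rw [h])
      fin_cases m <;> fin_cases n
      · exact absurd rfl hmn
      · exact hd01 i
      · exact hd02 i
      · exact (hd01 i).symm
      · exact absurd rfl hmn
      · exact hd12 i
      · exact (hd02 i).symm
      · exact (hd12 i).symm
      · exact absurd rfl hmn
    · exact Disjoint.mono (hsub (i,m)) (hsub (j,n)) (hball i j hij)
  have hsum := sum_setIntegral_abs_le t hmeas hdis hfint
  rw [Fintype.sum_prod_type] at hsum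
  simp only [Fin.sum_univ_three, ht0, ht1, ht2] at hsum
  -- aggregated quantities
  set E := ∑ i, (|S i - S0 i| + |T i - T0 i|) with hEdef
  set B := ∑ i, |b i - a i| with hBdef
  set M := ∑ i, max (q1 - |S i - S0 i|) 0 * |b i - a i| with hMdef
  have hEnn : 0 ≤ E := Finset.sum_nonneg fun i _ => by positivity
  have hBnn : 0 ≤ B := Finset.sum_nonneg fun i _ => abs_nonneg _
  have hMnn : 0 ≤ M := Finset.sum_nonneg fun i _ =>
    mul_nonneg (le_max_right _ _) (abs_nonneg _)
  have hkey : 2*r*E + M ≤ ∫ x, |f x| := by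
    have h1 : ∑ i, (|T i - T0 i| * (2*r) + max (q1 - |S i - S0 i|) 0 * |b i - a i|
        + |S i - S0 i| * (2*r)) ≤ ∫ x, |f x| := by
      refine le_trans (Finset.sum_le_sum fun i _ => ?_) hsum
      exact add_le_add (add_le_add (hI0 i) (hI1 i)) (hI2 i)
    have h2 : ∑ i, (|T i - T0 i| * (2*r) + max (q1 - |S i - S0 i|) 0 * |b i - a i|
        + |S i - S0 i| * (2*r)) = 2*r*E + M := by
      rw [hEdef, hMdef, Finset.mul_sum, ← Finset.sum_add_distrib]
      exact Finset.sum_congr rfl fun i _ => by ring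
    linarith
  have hSE : ∀ i, |S i - S0 i| ≤ E := by
    intro i
    refine le_trans (le_add_of_nonneg_right (abs_nonneg (T i - T0 i))) ?_
    exact Finset.single_le_sum (f := fun j => |S j - S0 j| + |T j - T0 j|)
      (fun j _ => by positivity) (mem_univ i)
  have hPp : ∀ i, |P i - p0 i| ≤ 2*A*(|S i - S0 i| + |T i - T0 i|)
      + (1/g) * |b i - a i| := by
    intro i
    have hbne : b i ≠ 0 := (hb i).ne'
    have hane : a i ≠ 0 := (ha i).ne'
    have hkeyi : P i - p0 i
        = b i * ((P i / b i) - (p0 i / a i)) + (p0 i / a i) * (b i - a i) := by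
      field_simp
      ring
    have hqd : (P i / b i) - (p0 i / a i) = (T i - T0 i) - (S i - S0 i) := by
      rw [hTS i, hTS0 i]; ring
    have h1 : |b i| ≤ 2*A := by rw [abs_of_pos (hb i)]; exact hbA i
    have h2 : |(P i / b i) - (p0 i / a i)| ≤ |T i - T0 i| + |S i - S0 i| := by
      rw [hqd]; exact abs_sub _ _
    have h3 : |p0 i / a i| ≤ 1/g := by
      rw [abs_of_pos (div_pos (hp0 i) (ha i))]; exact hq0up i
    calc |P i - p0 i|
        = |b i * ((P i / b i) - (p0 i / a i)) + (p0 i / a i) * (b i - a i)| := by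
          rw [hkeyi]
      _ ≤ |b i| * |(P i / b i) - (p0 i / a i)| + |p0 i / a i| * |b i - a i| := by
          refine le_trans (abs_add_le _ _) ?_
          rw [abs_mul, abs_mul]
      _ ≤ 2*A*(|S i - S0 i| + |T i - T0 i|) + (1/g) * |b i - a i| := by
          nlinarith [abs_nonneg ((P i / b i) - (p0 i / a i)), abs_nonneg (b i - a i),
            abs_nonneg (T i - T0 i), abs_nonneg (S i - S0 i), abs_nonneg (b i),
            abs_nonneg (p0 i / a i)]
  set D := ∑ i, (|b i - a i| + |P i - p0 i|) with hDdef
  have hDnn : 0 ≤ D := Finset.sum_nonneg fun i _ => by positivity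
  have hDCD : D ≤ CD * (E + B) := by
    have h1 : D ≤ 2*A*E + (1 + 1/g) * B := by
      rw [hDdef, hEdef, hBdef, Finset.mul_sum, Finset.mul_sum, ← Finset.sum_add_distrib]
      refine Finset.sum_le_sum fun i _ => ?_
      have := hPp i
      nlinarith [abs_nonneg (b i - a i)]
    have h2 : 0 < (1:ℝ)/g := by positivity
    rw [hCDdef]
    nlinarith
  have hDmaxb : D ≤ Dmax := by
    rw [hDdef, hDmaxdef]
    calc ∑ i, (|b i - a i| + |P i - p0 i|) ≤ ∑ _i : Fin k, (r + ε) :=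
          Finset.sum_le_sum fun i _ => add_le_add (hbc i).le (hPc i).le
      _ = k * (r + ε) := by
          rw [Finset.sum_const, Finset.card_univ, Fintype.card_fin, nsmul_eq_mul]
  rcases le_or_gt E (q1/2) with hcase | hcase
  · have hM' : (q1/2) * B ≤ M := by
      rw [hMdef, hBdef, Finset.mul_sum]
      refine Finset.sum_le_sum fun i _ => ?_
      refine mul_le_mul_of_nonneg_right ?_ (abs_nonneg _)
      refine le_trans ?_ (le_max_left _ _)
      linarith [hSE i]
    have hcmin : c ≤ (min (2*r) (q1/2)) / (2*CD) := min_le_left _ _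
    have hmin1 : min (2*r) (q1/2) ≤ 2*r := min_le_left _ _
    have hmin2 : min (2*r) (q1/2) ≤ q1/2 := min_le_right _ _
    have hIlow : min (2*r) (q1/2) * (E + B) ≤ ∫ x, |f x| := by
      nlinarith [hkey, hM', hEnn, hBnn]
    have hcd : c * CD ≤ min (2*r) (q1/2) / 2 := by
      calc c * CD ≤ ((min (2*r) (q1/2)) / (2*CD)) * CD :=
            mul_le_mul_of_nonneg_right hcmin hCD.le
        _ = min (2*r) (q1/2) / 2 := by
            rw [div_mul_eq_mul_div, mul_comm (2:ℝ) CD, ← div_div, mul_div_assoc,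
              div_self hCD.ne', mul_one]
    calc c * D ≤ c * (CD * (E + B)) := mul_le_mul_of_nonneg_left hDCD hcpos.le
      _ = (c * CD) * (E + B) := by ring
      _ ≤ (min (2*r) (q1/2) / 2) * (E + B) :=
          mul_le_mul_of_nonneg_right hcd (by linarith)
      _ ≤ (1/2) * ∫ x, |f x| := by linarith [hIlow]
  · have hIlow : r * q1 ≤ ∫ x, |f x| := by nlinarith [hkey, hMnn, hr]
    have hcmin : c ≤ r * q1 / (2 * Dmax) := min_le_right _ _
    calc c * D ≤ c * Dmax := mul_le_mul_of_nonneg_left hDmaxb hcpos.le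
      _ ≤ (r * q1 / (2 * Dmax)) * Dmax := mul_le_mul_of_nonneg_right hcmin hDmax.le
      _ = r * q1 / 2 := by field_simp
      _ ≤ (1/2) * ∫ x, |f x| := by linarith

lemma matching_perm {k : ℕ} (θ0 θ p p0 : Fin k → ℝ) (Q : Fin k → Fin k → ℝ) {r δ : ℝ}
    (hr : 0 < r) (hQ0 : ∀ i j, 0 ≤ Q i j) (hrow : ∀ i, ∑ j, Q i j = p i)
    (hcol : ∀ j, ∑ i, Q i j = p0 j)
    (hcost : ∑ i, ∑ j, Q i j * |θ i - θ0 j| < δ)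
    (hsep : ∀ i j, i ≠ j → 2 * r ≤ |θ0 i - θ0 j|)
    (hbig : ∀ i, δ / r < p0 i) :
    ∃ τ : Equiv.Perm (Fin k),
      ∀ i, |θ (τ i) - θ0 i| < r ∧ |p (τ i) - p0 i| ≤ 2 * k * (δ / r) := by
  have hterm : ∀ i j, 0 ≤ Q i j * |θ i - θ0 j| :=
    fun i j => mul_nonneg (hQ0 i j) (abs_nonneg _)
  have hδ0 : 0 ≤ δ := le_of_lt (lt_of_le_of_lt
    (Finset.sum_nonneg fun i _ => Finset.sum_nonneg fun j _ => hterm i j) hcost)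
  have hδr : 0 ≤ δ / r := div_nonneg hδ0 hr.le
  -- column partial sums bounded by cost
  have hcolcost : ∀ i, ∑ j, Q j i * |θ j - θ0 i| < δ := by
    intro i
    refine lt_of_le_of_lt (Finset.sum_le_sum fun j _ => ?_) hcost
    exact Finset.single_le_sum (fun i' _ => hterm j i') (mem_univ i)
  set A : Fin k → Finset (Fin k) := fun i => univ.filter (fun j => |θ j - θ0 i| < r) with hA
  have hQfar : ∀ j i, r ≤ |θ j - θ0 i| → Q j i ≤ δ / r := by
    intro j i hfar
    rw [le_div_iff₀ hr]
    calc Q j i * r ≤ Q j i * |θ j - θ0 i| := by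
          exact mul_le_mul_of_nonneg_left hfar (hQ0 j i)
      _ ≤ ∑ j', Q j' i * |θ j' - θ0 i| :=
          Finset.single_le_sum (fun j' _ => hterm j' i) (mem_univ j)
      _ ≤ δ := (hcolcost i).le
  have hfarsum : ∀ i, ∑ j ∈ univ.filter (fun j => ¬ |θ j - θ0 i| < r), Q j i ≤ δ / r := by
    intro i
    rw [le_div_iff₀ hr, Finset.sum_mul]
    calc ∑ j ∈ univ.filter (fun j => ¬ |θ j - θ0 i| < r), Q j i * r
        ≤ ∑ j ∈ univ.filter (fun j => ¬ |θ j - θ0 i| < r), Q j i * |θ j - θ0 i| := by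
          refine Finset.sum_le_sum fun j hj => ?_
          exact mul_le_mul_of_nonneg_left (not_lt.mp (mem_filter.mp hj).2) (hQ0 j i)
      _ ≤ ∑ j, Q j i * |θ j - θ0 i| :=
          Finset.sum_le_sum_of_subset_of_nonneg (Finset.filter_subset _ _)
            (fun j _ _ => hterm j i)
      _ ≤ δ := (hcolcost i).le
  have hAne : ∀ i, (A i).Nonempty := by
    intro i
    rw [Finset.nonempty_iff_ne_empty]
    intro hemp
    have hsplit : ∑ j ∈ A i, Q j i + ∑ j ∈ univ.filter (fun j => ¬ |θ j - θ0 i| < r), Q j i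
        = p0 i := by rw [Finset.sum_filter_add_sum_filter_not]; exact hcol i
    rw [hemp, Finset.sum_empty, zero_add] at hsplit
    exact absurd (hsplit ▸ hfarsum i) (not_le.mpr (hbig i))
  have hdisj : ∀ i i', i ≠ i' → Disjoint (A i) (A i') := by
    intro i i' hne
    rw [Finset.disjoint_left]
    intro j hj hj'
    have h1 := (mem_filter.mp hj).2
    have h2 := (mem_filter.mp hj').2
    have := hsep i i' hne
    have : |θ0 i - θ0 i'| ≤ |θ j - θ0 i| + |θ j - θ0 i'| := by
      have := abs_sub (θ0 i) (θ0 i')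
      calc |θ0 i - θ0 i'| = |(θ j - θ0 i') - (θ j - θ0 i)| := by ring_nf
        _ ≤ |θ j - θ0 i'| + |θ j - θ0 i| := abs_sub _ _
        _ = |θ j - θ0 i| + |θ j - θ0 i'| := by ring
    linarith [hsep i i' hne]
  have hcard : ∀ i, (A i).card = 1 := by
    have hsum : ∑ i, (A i).card ≤ k := by
      rw [← Finset.card_biUnion (fun i _ => fun j _ hij => hdisj i j hij)]
      simpa using Finset.card_le_univ (univ.biUnion A)
    intro i
    by_contra hne1
    have h2 : 2 ≤ (A i).card := by
      have := (hAne i).card_pos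
      omega
    have : k < ∑ i, (A i).card := by
      calc k = ∑ _i : Fin k, 1 := by simp
        _ < ∑ i, (A i).card := by
            refine Finset.sum_lt_sum (fun j _ => (hAne j).card_pos) ⟨i, mem_univ i, ?_⟩
            omega
    omega
  choose σ hσ using fun i => Finset.card_eq_one.mp (hcard i)
  have hσmem : ∀ i, σ i ∈ A i := fun i => (hσ i).symm ▸ Finset.mem_singleton_self _
  have hσclose : ∀ i, |θ (σ i) - θ0 i| < r := fun i => (mem_filter.mp (hσmem i)).2
  have hσinj : Function.Injective σ := by
    intro i i' he
    by_contra hne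
    exact (Finset.disjoint_left.mp (hdisj i i' hne)) (hσmem i) (he ▸ hσmem i')
  refine ⟨Equiv.ofBijective σ (Finite.injective_iff_bijective.mp hσinj), fun i => ?_⟩
  refine ⟨hσclose i, ?_⟩
  have h1 : p (σ i) = Q (σ i) i + ∑ i' ∈ univ.erase i, Q (σ i) i' := by
    rw [← hrow (σ i), ← Finset.add_sum_erase _ _ (mem_univ i)]
  have h2 : p0 i = Q (σ i) i + ∑ j ∈ univ.erase (σ i), Q j i := by
    rw [← hcol i, ← Finset.add_sum_erase _ _ (mem_univ (σ i))]
  have hb1 : ∑ i' ∈ univ.erase i, Q (σ i) i' ≤ (k : ℝ) * (δ / r) := by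
    calc ∑ i' ∈ univ.erase i, Q (σ i) i' ≤ ∑ _i' ∈ univ.erase i, (δ / r) := by
          refine Finset.sum_le_sum fun i' hi' => ?_
          refine hQfar (σ i) i' (not_lt.mp fun hlt => ?_)
          have : σ i ∈ A i' := mem_filter.mpr ⟨mem_univ _, hlt⟩
          rw [hσ i'] at this
          exact (Finset.mem_erase.mp hi').1 (hσinj (Finset.mem_singleton.mp this)).symm
      _ ≤ (k : ℝ) * (δ / r) := by
          rw [Finset.sum_const, nsmul_eq_mul]
          refine mul_le_mul_of_nonneg_right ?_ hδr
          have hcle : (univ.erase i).card ≤ k :=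
            le_trans Finset.card_erase_le (by simp [Finset.card_fin])
          exact_mod_cast hcle
  have hb2 : ∑ j ∈ univ.erase (σ i), Q j i ≤ (k : ℝ) * (δ / r) := by
    calc ∑ j ∈ univ.erase (σ i), Q j i ≤ ∑ _j ∈ univ.erase (σ i), (δ / r) := by
          refine Finset.sum_le_sum fun j hj => ?_
          refine hQfar j i (not_lt.mp fun hlt => ?_)
          have : j ∈ A i := mem_filter.mpr ⟨mem_univ _, hlt⟩
          rw [hσ i] at this
          exact (Finset.mem_erase.mp hj).1 (Finset.mem_singleton.mp this)
      _ ≤ (k : ℝ) * (δ / r) := by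
          rw [Finset.sum_const, nsmul_eq_mul]
          refine mul_le_mul_of_nonneg_right ?_ hδr
          have hcle : (univ.erase (σ i)).card ≤ k :=
            le_trans Finset.card_erase_le (by simp [Finset.card_fin])
          exact_mod_cast hcle
  have hnn1 : 0 ≤ ∑ i' ∈ univ.erase i, Q (σ i) i' :=
    Finset.sum_nonneg fun i' _ => hQ0 _ _
  have hnn2 : 0 ≤ ∑ j ∈ univ.erase (σ i), Q j i :=
    Finset.sum_nonneg fun j _ => hQ0 _ _
  have : (Equiv.ofBijective σ (Finite.injective_iff_bijective.mp hσinj)) i = σ i := rfl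
  rw [this, abs_le]
  constructor <;> nlinarith


end helpers

/-- Inverse bound for finite mixtures of uniform kernels `f(x|θ) = θ⁻¹ 1_{(0,θ)}(x)`:
for any `G₀ ∈ 𝓔_{k₀}((0,∞))` there are `c > 0` and `δ > 0` such that every
`G ∈ 𝓔_{k₀}((0,∞))` with `W₁(G,G₀) < δ` satisfies `c·D₁(G,G₀) ≤ V(P_G, P_{G₀})`
(so the liminf of `V/D₁` as `G → G₀` in `W₁` is positive). -/
theorem stmt_15 (k0 : ℕ) (hk0 : 1 ≤ k0)
    (θ0 : Fin k0 → ℝ) (hθ0pos : ∀ i, 0 < θ0 i) (hθ0inj : Function.Injective θ0)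
    (p0 : Fin k0 → ℝ) (hp0 : ∀ i, 0 < p0 i) (hp0s : ∑ i, p0 i = 1) :
    ∃ c > 0, ∃ δ > 0,
      ∀ (θ : Fin k0 → ℝ) (p : Fin k0 → ℝ),
        (∀ i, 0 < θ i) → Function.Injective θ → (∀ i, 0 < p i) → (∑ i, p i = 1) →
        sInf {s : ℝ | ∃ Q : Fin k0 → Fin k0 → ℝ,
            (∀ i j, 0 ≤ Q i j) ∧ (∀ i, ∑ j, Q i j = p i) ∧ (∀ j, ∑ i, Q i j = p0 j) ∧
            s = ∑ i, ∑ j, Q i j * |θ i - θ0 j|} < δ →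
        c * (⨅ τ : Equiv.Perm (Fin k0), ∑ i, (|θ (τ i) - θ0 i| + |p (τ i) - p0 i|)) ≤
          (1 / 2) * ∫ x,
            |(∑ i, p i * (Set.Ioo (0 : ℝ) (θ i)).indicator (fun _ => 1 / θ i) x)
              - ∑ i, p0 i * (Set.Ioo (0 : ℝ) (θ0 i)).indicator (fun _ => 1 / θ0 i) x|
            ∂volume := by
  obtain ⟨c, hc, r, hr, ε, hε, hsep, hεp0, hcore⟩ :=
    core_bound k0 hk0 θ0 hθ0pos hθ0inj p0 hp0 hp0s
  have hk0R : (1:ℝ) ≤ (k0:ℝ) := by exact_mod_cast hk0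
  refine ⟨c, hc, r * ε / (2 * k0 + 1), by positivity, ?_⟩
  set δ := r * ε / (2 * k0 + 1) with hδdef
  intro θ p hθpos hθinj hppos hps hW
  -- extract a near-optimal coupling
  have hSne : {s : ℝ | ∃ Q : Fin k0 → Fin k0 → ℝ,
      (∀ i j, 0 ≤ Q i j) ∧ (∀ i, ∑ j, Q i j = p i) ∧ (∀ j, ∑ i, Q i j = p0 j) ∧
      s = ∑ i, ∑ j, Q i j * |θ i - θ0 j|}.Nonempty := by
    refine ⟨∑ i, ∑ j, (p i * p0 j) * |θ i - θ0 j|, fun i j => p i * p0 j,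
      fun i j => mul_nonneg (hppos i).le (hp0 j).le, ?_, ?_, rfl⟩
    · intro i; rw [← Finset.mul_sum, hp0s, mul_one]
    · intro j; rw [← Finset.sum_mul, hps, one_mul]
  obtain ⟨s, hsmem, hslt⟩ := exists_lt_of_csInf_lt hSne hW
  obtain ⟨Q, hQ0, hrow, hcol, rfl⟩ := hsmem
  have hδr : δ / r = ε / (2 * k0 + 1) := by
    rw [hδdef, div_div, div_eq_div_iff (by positivity) (by positivity)]
    ring
  have hbig : ∀ i, δ / r < p0 i := by
    intro i
    rw [hδr]
    refine lt_of_lt_of_le ?_ (hεp0 i)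
    rw [div_lt_iff₀ (by positivity)]
    nlinarith
  obtain ⟨τ, hτ⟩ := matching_perm θ0 θ p p0 Q hr hQ0 hrow hcol hslt hsep hbig
  have hθc : ∀ i, |θ (τ i) - θ0 i| < r := fun i => (hτ i).1
  have hpc : ∀ i, |p (τ i) - p0 i| < ε := by
    intro i
    refine lt_of_le_of_lt (hτ i).2 ?_
    rw [hδr]
    have h1 : (0:ℝ) < 2 * (k0:ℝ) + 1 := by positivity
    calc 2 * (k0:ℝ) * (ε / (2 * (k0:ℝ) + 1)) = (2 * (k0:ℝ) * ε) / (2 * (k0:ℝ) + 1) := by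
          ring
      _ < ε := by rw [div_lt_iff₀ h1]; nlinarith
  have hmain := hcore (fun i => θ (τ i)) (fun i => p (τ i))
    (fun i => hθpos (τ i)) (fun i => hppos (τ i)) hθc hpc
  have hint : ∀ x, (∑ i, p (τ i) * (Set.Ioo (0:ℝ) (θ (τ i))).indicator
      (fun _ => 1 / θ (τ i)) x)
      = ∑ i, p i * (Set.Ioo (0:ℝ) (θ i)).indicator (fun _ => 1 / θ i) x := fun x =>
    Equiv.sum_comp τ (fun i => p i * (Set.Ioo (0:ℝ) (θ i)).indicator (fun _ => 1 / θ i) x)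
  have hbdd : BddBelow (Set.range fun τ' : Equiv.Perm (Fin k0) =>
      ∑ i, (|θ (τ' i) - θ0 i| + |p (τ' i) - p0 i|)) := by
    refine ⟨0, ?_⟩
    rintro y ⟨τ', rfl⟩
    exact Finset.sum_nonneg fun i _ => by positivity
  have hinf_le : (⨅ τ' : Equiv.Perm (Fin k0), ∑ i, (|θ (τ' i) - θ0 i| + |p (τ' i) - p0 i|))
      ≤ ∑ i, (|θ (τ i) - θ0 i| + |p (τ i) - p0 i|) := ciInf_le hbdd τ
  calc c * (⨅ τ' : Equiv.Perm (Fin k0), ∑ i, (|θ (τ' i) - θ0 i| + |p (τ' i) - p0 i|))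
      ≤ c * ∑ i, (|θ (τ i) - θ0 i| + |p (τ i) - p0 i|) :=
        mul_le_mul_of_nonneg_left hinf_le hc.le
    _ ≤ (1/2) * ∫ x, |(∑ i, p (τ i) * (Set.Ioo (0:ℝ) (θ (τ i))).indicator
          (fun _ => 1 / θ (τ i)) x)
          - ∑ i, p0 i * (Set.Ioo (0:ℝ) (θ0 i)).indicator (fun _ => 1 / θ0 i) x| := hmain
    _ = (1/2) * ∫ x, |(∑ i, p i * (Set.Ioo (0:ℝ) (θ i)).indicator (fun _ => 1 / θ i) x)
          - ∑ i, p0 i * (Set.Ioo (0:ℝ) (θ0 i)).indicator (fun _ => 1 / θ0 i) x| := by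
        congr 1
        refine integral_congr_ae (Filter.Eventually.of_forall fun x => ?_)
        simp only [hint x]
end

section
/- Let $\{f(x|\theta)\}_{\theta \in \Theta}$, $\Theta \subset \mathbb{R}^q$, be a family of probability densities with respect to a $\sigma$-finite measure $\mu$ on $\mathfrak{X}$, and fix $G_0 = \sum_{i=1}^{k_0} p_i^0 \delta_{\theta_i^0}$ with $\theta_i^0$ in the interior of $\Theta$ and $p_i^0 \in (0,1)$. Assume: (a) there is a $\mu$-null set $\mathcal{N}$ such that for every $x \notin \mathcal{N}$, $\theta \mapsto f(x|\theta)$ is differentiable at each $\theta_i^0$; (b) there exist $(a_1,b_1,\ldots,a_{k_0},b_{k_0})$, not all zero, with $\sum_{i=1}^{k_0}(a_i^\top \nabla_\theta f(x|\theta_i^0) + b_i f(x|\theta_i^0)) = 0$ for $\mu$-a.e. $x \notin \mathcal{N}$; (c) for each $i$ there is $\gamma_i > 0$ and a $\mu$-integrable $\bar{f}_i$ such that $|f(x|\theta_i^0 + a_i\Delta) - f(x|\theta_i^0)|/\Delta \leq \bar{f}_i(x)$ for $\mu$-a.e. $x$ and all $0 < \Delta \leq \gamma_i$. Then $\liminf_{G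 \overset{W_1}{\to} G_0,\, G \in \mathcal{E}_{k_0}(\Theta)} \frac{V(p_G, p_{G_0})}{D_1(G, G_0)} = 0$. -/
open MeasureTheory
open scoped BigOperators

open Filter Topology in
lemma density_int {X : Type*} [MeasurableSpace X] (μ : Measure X) (h : X → ℝ)
    (hm : Measurable h) (hnn : ∀ x, 0 ≤ h x)
    (hd : ∫⁻ x, ENNReal.ofReal (h x) ∂μ = 1) :
    Integrable h μ ∧ ∫ x, h x ∂μ = 1 := by
  have hfin : HasFiniteIntegral h μ := by
    rw [hasFiniteIntegral_iff_norm]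
    have : ∀ x, ENNReal.ofReal ‖h x‖ = ENNReal.ofReal (h x) := by
      intro x; rw [Real.norm_eq_abs, abs_of_nonneg (hnn x)]
    simp only [this, hd]
    exact ENNReal.one_lt_top
  refine ⟨⟨hm.aestronglyMeasurable, hfin⟩, ?_⟩
  rw [integral_eq_lintegral_of_nonneg_ae (Filter.Eventually.of_forall hnn) hm.aestronglyMeasurable,
    hd]
  simp

open Filter Topology in
lemma dirderiv {E : Type*} [NormedAddCommGroup E] [InnerProductSpace ℝ E] [CompleteSpace E]
    (f : E → ℝ) (g θ v : E) (h : HasGradientAt f g θ) :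
    Tendsto (fun t : ℝ => (f (θ + t • v) - f θ) / t) (𝓝[>] 0) (𝓝 (inner ℝ v g : ℝ)) := by
  have line : HasDerivAt (fun t : ℝ => θ + t • v) v 0 := by
    simpa using ((hasDerivAt_id (0:ℝ)).smul_const v).const_add θ
  have h' : HasFDerivAt f ((InnerProductSpace.toDual ℝ E) g) ((fun t : ℝ => θ + t • v) 0) := by
    simpa using h.hasFDerivAt
  have comp : HasDerivAt (fun t : ℝ => f (θ + t • v)) ((InnerProductSpace.toDual ℝ E g) v) 0 :=
    h'.comp_hasDerivAt 0 line
  have hval : (InnerProductSpace.toDual ℝ E g) v = (inner ℝ v g : ℝ) := by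
    rw [InnerProductSpace.toDual_apply_apply, real_inner_comm]
  rw [hval] at comp
  have := (hasDerivAt_iff_tendsto_slope.1 comp).mono_left
    (nhdsWithin_mono _ (fun t ht => (ne_of_gt ht : t ≠ 0)))
  refine this.congr (fun t => ?_)
  simp [slope_def_field, div_eq_inv_mul]

open Filter Topology in
lemma grad_int {X : Type*} [MeasurableSpace X] (μ : Measure X)
    {E : Type*} [NormedAddCommGroup E] [InnerProductSpace ℝ E] [CompleteSpace E]
    (Θ : Set E) (f : X → E → ℝ)
    (hfmeas : ∀ ϑ ∈ Θ, Measurable fun x => f x ϑ)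
    (hfnn : ∀ ϑ ∈ Θ, ∀ x, 0 ≤ f x ϑ)
    (hfdens : ∀ ϑ ∈ Θ, ∫⁻ x, ENNReal.ofReal (f x ϑ) ∂μ = 1)
    (θc v : E) (hθc : θc ∈ Θ)
    (hmem : ∀ᶠ t in 𝓝[>] (0:ℝ), θc + t • v ∈ Θ)
    (G : X → E) (hder : ∀ᵐ x ∂μ, HasGradientAt (f x) (G x) θc)
    (γ : ℝ) (hγ : 0 < γ) (fbar : X → ℝ) (hfbar : Integrable fbar μ)
    (hbnd : ∀ Δ : ℝ, 0 < Δ → Δ ≤ γ →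
      ∀ᵐ x ∂μ, |f x (θc + Δ • v) - f x θc| / Δ ≤ fbar x) :
    Integrable (fun x => (inner ℝ v (G x) : ℝ)) μ ∧
      ∫ x, (inner ℝ v (G x) : ℝ) ∂μ = 0 := by
  obtain ⟨u, hu, hsub⟩ := mem_nhdsGT_iff_exists_Ioc_subset.1 hmem
  set t0 : ℝ := min u γ with ht0def
  have ht0 : 0 < t0 := lt_min hu hγ
  have hIoc : ∀ t : ℝ, t ∈ Set.Ioc (0:ℝ) t0 → (θc + t • v ∈ Θ ∧ t ≤ γ) := by
    intro t ht
    exact ⟨hsub ⟨ht.1, ht.2.trans (min_le_left _ _)⟩, ht.2.trans (min_le_right _ _)⟩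
  set s : ℕ → ℝ := fun n => t0 / (n + 1) with hsdef
  have hs_mem : ∀ n, s n ∈ Set.Ioc (0:ℝ) t0 := by
    intro n
    constructor
    · positivity
    · rw [div_le_iff₀ (by positivity)]
      nlinarith [ht0.le, Nat.cast_nonneg (α := ℝ) n]
  have hs_tend : Tendsto s atTop (𝓝[>] (0:ℝ)) := by
    rw [tendsto_nhdsWithin_iff]
    constructor
    · have h1 : Tendsto (fun n : ℕ => t0 / (n:ℝ)) atTop (𝓝 0) :=
        tendsto_const_div_atTop_nhds_zero_nat t0
      have := h1.comp (tendsto_add_atTop_nat 1)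
      refine this.congr fun n => ?_
      simp [hsdef, Function.comp]
    · exact Filter.Eventually.of_forall fun n => (hs_mem n).1
  set Q : ℝ → X → ℝ := fun t x => (f x (θc + t • v) - f x θc) / t with hQdef
  have hptt : ∀ᵐ x ∂μ, Tendsto (fun n => Q (s n) x) atTop (𝓝 (inner ℝ v (G x) : ℝ)) := by
    filter_upwards [hder] with x hx
    exact (dirderiv (f x) (G x) θc v hx).comp hs_tend
  have hQmeas : ∀ n, AEStronglyMeasurable (Q (s n)) μ := by
    intro n
    have h1 := hfmeas _ (hIoc _ (hs_mem n)).1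
    have h2 := hfmeas _ hθc
    exact (((h1.sub h2).div_const _)).aestronglyMeasurable
  have hAESM : AEStronglyMeasurable (fun x => (inner ℝ v (G x) : ℝ)) μ :=
    aestronglyMeasurable_of_tendsto_ae atTop hQmeas hptt
  have hQbnd : ∀ n, ∀ᵐ x ∂μ, ‖Q (s n) x‖ ≤ fbar x := by
    intro n
    filter_upwards [hbnd (s n) (hs_mem n).1 (hIoc _ (hs_mem n)).2] with x hx
    rw [Real.norm_eq_abs, hQdef]
    simpa [abs_div, abs_of_pos (hs_mem n).1] using hx
  have hGbnd : ∀ᵐ x ∂μ, ‖(inner ℝ v (G x) : ℝ)‖ ≤ fbar x := by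
    filter_upwards [hptt, ae_all_iff.2 hQbnd] with x hx hb
    exact le_of_tendsto ((continuous_norm.tendsto _).comp hx)
      (Filter.Eventually.of_forall hb)
  have hint : Integrable (fun x => (inner ℝ v (G x) : ℝ)) μ := by
    refine hfbar.mono hAESM ?_
    filter_upwards [hGbnd] with x hx
    exact hx.trans (le_abs_self _)
  refine ⟨hint, ?_⟩
  have hzero : ∀ n, ∫ x, Q (s n) x ∂μ = 0 := by
    intro n
    obtain ⟨hmemn, _⟩ := hIoc _ (hs_mem n)
    obtain ⟨hi1, he1⟩ := density_int μ _ (hfmeas _ hmemn) (hfnn _ hmemn) (hfdens _ hmemn)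
    obtain ⟨hi2, he2⟩ := density_int μ _ (hfmeas _ hθc) (hfnn _ hθc) (hfdens _ hθc)
    simp only [hQdef, div_eq_mul_inv]
    rw [integral_mul_const, integral_sub hi1 hi2, he1, he2]
    ring
  have hDCT := tendsto_integral_filter_of_dominated_convergence (μ := μ)
    (F := fun n => Q (s n)) (f := fun x => (inner ℝ v (G x) : ℝ)) fbar
    (Filter.Eventually.of_forall hQmeas) (Filter.Eventually.of_forall hQbnd) hfbar hptt
  simp only [hzero] at hDCT
  exact tendsto_nhds_unique hDCT tendsto_const_nhds

/-- The `W₁` distance between two discrete measures on `ℝ^q` given by atoms/weights. -/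
noncomputable def W1dist {q k : ℕ} (θ θ' : Fin k → EuclideanSpace ℝ (Fin q))
    (p p' : Fin k → ℝ) : ℝ :=
  sInf {s : ℝ | ∃ Q : Fin k → Fin k → ℝ,
    (∀ i j, 0 ≤ Q i j) ∧ (∀ i, ∑ j, Q i j = p i) ∧ (∀ j, ∑ i, Q i j = p' j) ∧
    s = ∑ i, ∑ j, Q i j * dist (θ i) (θ' j)}

/-- The `D₁` distance between two discrete measures on `ℝ^q` given by atoms/weights. -/
noncomputable def D1dist {q k : ℕ} (θ θ' : Fin k → EuclideanSpace ℝ (Fin q))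
    (p p' : Fin k → ℝ) : ℝ :=
  ⨅ τ : Equiv.Perm (Fin k), ∑ i, (dist (θ (τ i)) (θ' i) + |p (τ i) - p' i|)

lemma W1_le {q k : ℕ} (θ θ' : Fin k → EuclideanSpace ℝ (Fin q)) (p p' : Fin k → ℝ)
    (hp : ∀ i, 0 ≤ p i) (hp' : ∀ i, 0 ≤ p' i)
    (hs : ∑ i, p i = 1) (hs' : ∑ i, p' i = 1)
    (M : ℝ) (hM0 : 0 ≤ M) (hM : ∀ i j, dist (θ i) (θ' j) ≤ M) :
    W1dist θ θ' p p' ≤ ∑ i, dist (θ i) (θ' i) + M * ∑ i, |p i - p' i| := by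
  classical
  set m : Fin k → ℝ := fun i => min (p i) (p' i) with hm
  set u : Fin k → ℝ := fun i => p i - m i with hudef
  set v : Fin k → ℝ := fun j => p' j - m j with hvdef
  set r : ℝ := ∑ i, u i with hrdef
  have hu : ∀ i, 0 ≤ u i := fun i => sub_nonneg.2 (min_le_left _ _)
  have hv : ∀ j, 0 ≤ v j := fun j => sub_nonneg.2 (min_le_right _ _)
  have hm0 : ∀ i, 0 ≤ m i := fun i => le_min (hp i) (hp' i)
  have hr0 : 0 ≤ r := Finset.sum_nonneg fun i _ => hu i
  have hvr : ∑ j, v j = r := by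
    simp only [hvdef, hudef, hrdef, Finset.sum_sub_distrib, hs, hs']
  set Q : Fin k → Fin k → ℝ := fun i j => (if i = j then m i else 0) + u i * v j / r
    with hQdef
  have hQnn : ∀ i j, 0 ≤ Q i j := by
    intro i j
    have h1 : 0 ≤ u i * v j / r := div_nonneg (mul_nonneg (hu i) (hv j)) hr0
    have h2 : 0 ≤ (if i = j then m i else 0) := by
      split
      · exact hm0 i
      · exact le_rfl
    exact add_nonneg h2 h1
  have hcase : ∀ i, u i * r / r = u i := by
    intro i
    rcases eq_or_ne r 0 with h | h
    · have : u i = 0 := by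
        have := (Finset.sum_eq_zero_iff_of_nonneg (fun i _ => hu i)).1 (hrdef ▸ h)
        exact this i (Finset.mem_univ i)
      simp [this]
    · rw [mul_div_assoc, div_self h, mul_one]
  have hcasev : ∀ j, r * v j / r = v j := by
    intro j
    rcases eq_or_ne r 0 with h | h
    · have hvz : v j = 0 := by
        have := (Finset.sum_eq_zero_iff_of_nonneg (fun j _ => hv j)).1 (hvr.trans h)
        exact this j (Finset.mem_univ j)
      simp [hvz]
    · rw [mul_comm, mul_div_assoc, div_self h, mul_one]
  have hrow : ∀ i, ∑ j, Q i j = p i := by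
    intro i
    simp only [hQdef, Finset.sum_add_distrib, Finset.sum_ite_eq, Finset.mem_univ, if_true]
    have : ∑ j, u i * v j / r = u i * r / r := by
      rw [← Finset.sum_div, ← Finset.mul_sum, hvr]
    rw [this, hcase i]
    simp [hudef]
  have hcol : ∀ j, ∑ i, Q i j = p' j := by
    intro j
    simp only [hQdef, Finset.sum_add_distrib]
    have h1 : ∑ i, (if i = j then m i else 0) = m j := by
      rw [Finset.sum_ite_eq' Finset.univ j m]
      simp
    have h2 : ∑ i, u i * v j / r = r * v j / r := by
      rw [← Finset.sum_div, ← Finset.sum_mul, ← hrdef]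
    rw [h1, h2, hcasev j]
    simp [hvdef]
  have hcost : ∑ i, ∑ j, Q i j * dist (θ i) (θ' j)
      ≤ ∑ i, dist (θ i) (θ' i) + M * ∑ i, |p i - p' i| := by
    have hsplit : ∑ i, ∑ j, Q i j * dist (θ i) (θ' j)
        = ∑ i, m i * dist (θ i) (θ' i) + ∑ i, ∑ j, u i * v j / r * dist (θ i) (θ' j) := by
      simp only [hQdef, add_mul, Finset.sum_add_distrib]
      congr 1
      refine Finset.sum_congr rfl fun i _ => ?_
      simp [ite_mul, Finset.sum_ite_eq]
    rw [hsplit]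
    have hb1 : ∑ i, m i * dist (θ i) (θ' i) ≤ ∑ i, dist (θ i) (θ' i) := by
      refine Finset.sum_le_sum fun i _ => ?_
      have hm1 : m i ≤ 1 := by
        calc m i ≤ p i := min_le_left _ _
        _ ≤ ∑ i, p i := Finset.single_le_sum (fun i _ => hp i) (Finset.mem_univ i)
        _ = 1 := hs
      nlinarith [dist_nonneg (x := θ i) (y := θ' i), hm0 i]
    have hb2 : ∑ i, ∑ j, u i * v j / r * dist (θ i) (θ' j) ≤ M * ∑ i, |p i - p' i| := by
      have step1 : ∑ i, ∑ j, u i * v j / r * dist (θ i) (θ' j) ≤ ∑ i, ∑ j, u i * v j / r * M := by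
        refine Finset.sum_le_sum fun i _ => Finset.sum_le_sum fun j _ => ?_
        have : 0 ≤ u i * v j / r := div_nonneg (mul_nonneg (hu i) (hv j)) hr0
        exact mul_le_mul_of_nonneg_left (hM i j) this
      have step2 : ∑ i, ∑ j, u i * v j / r * M = r * r / r * M := by
        have h1 : ∀ i, ∑ j, u i * v j / r * M = u i * r / r * M := by
          intro i
          rw [← Finset.sum_mul, ← Finset.sum_div, ← Finset.mul_sum, hvr]
        simp only [h1]
        rw [← Finset.sum_mul, ← Finset.sum_div, ← Finset.sum_mul, ← hrdef]
      have hrr : r * r / r ≤ r := by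
        rcases eq_or_ne r 0 with h | h
        · simp [h]
        · rw [mul_div_assoc, div_self h, mul_one]
      have hrb : r ≤ ∑ i, |p i - p' i| := by
        rw [hrdef]
        refine Finset.sum_le_sum fun i _ => ?_
        have hui : u i = p i - min (p i) (p' i) := rfl
        rcases min_cases (p i) (p' i) with ⟨hmin, _⟩ | ⟨hmin, _⟩
        · rw [hui, hmin, sub_self]
          exact abs_nonneg _
        · rw [hui, hmin]
          exact le_abs_self _
      calc ∑ i, ∑ j, u i * v j / r * dist (θ i) (θ' j) ≤ r * r / r * M := step1.trans_eq step2
        _ ≤ r * M := mul_le_mul_of_nonneg_right hrr hM0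
        _ ≤ (∑ i, |p i - p' i|) * M := mul_le_mul_of_nonneg_right hrb hM0
        _ = M * ∑ i, |p i - p' i| := mul_comm _ _
    linarith
  have hmem : (∑ i, ∑ j, Q i j * dist (θ i) (θ' j)) ∈ {s : ℝ | ∃ Q : Fin k → Fin k → ℝ,
      (∀ i j, 0 ≤ Q i j) ∧ (∀ i, ∑ j, Q i j = p i) ∧ (∀ j, ∑ i, Q i j = p' j) ∧
      s = ∑ i, ∑ j, Q i j * dist (θ i) (θ' j)} := ⟨Q, hQnn, hrow, hcol, rfl⟩
  have hbdd : BddBelow {s : ℝ | ∃ Q : Fin k → Fin k → ℝ,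
      (∀ i j, 0 ≤ Q i j) ∧ (∀ i, ∑ j, Q i j = p i) ∧ (∀ j, ∑ i, Q i j = p' j) ∧
      s = ∑ i, ∑ j, Q i j * dist (θ i) (θ' j)} := by
    refine ⟨0, fun s hs => ?_⟩
    obtain ⟨Q', hQ', _, _, rfl⟩ := hs
    exact Finset.sum_nonneg fun i _ => Finset.sum_nonneg fun j _ =>
      mul_nonneg (hQ' i j) dist_nonneg
  exact (csInf_le hbdd hmem).trans hcost

lemma D1_eq {q k : ℕ} (θ θ' : Fin k → EuclideanSpace ℝ (Fin q)) (p p' : Fin k → ℝ) (C : ℝ)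
    (hdiag : ∑ i, (dist (θ i) (θ' i) + |p i - p' i|) = C)
    (hoff : ∀ i j, j ≠ i → C ≤ dist (θ j) (θ' i)) :
    D1dist θ θ' p p' = C := by
  have hbdd : BddBelow (Set.range fun τ : Equiv.Perm (Fin k) =>
      ∑ i, (dist (θ (τ i)) (θ' i) + |p (τ i) - p' i|)) := by
    refine ⟨0, fun s hs => ?_⟩
    obtain ⟨τ, rfl⟩ := hs
    exact Finset.sum_nonneg fun i _ => add_nonneg dist_nonneg (abs_nonneg _)
  refine le_antisymm ?_ ?_
  · have h := ciInf_le hbdd (1 : Equiv.Perm (Fin k))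
    simpa [hdiag, D1dist] using h
  · refine le_ciInf fun τ => ?_
    by_cases h : ∀ i, τ i = i
    · rw [← hdiag]
      refine le_of_eq (Finset.sum_congr rfl fun i _ => ?_)
      rw [h i]
    · push_neg at h
      obtain ⟨i, hi⟩ := h
      calc C ≤ dist (θ (τ i)) (θ' i) := hoff i (τ i) hi
        _ ≤ dist (θ (τ i)) (θ' i) + |p (τ i) - p' i| := le_add_of_nonneg_right (abs_nonneg _)
        _ ≤ ∑ i, (dist (θ (τ i)) (θ' i) + |p (τ i) - p' i|) :=
          Finset.single_le_sum (f := fun j => dist (θ (τ j)) (θ' j) + |p (τ j) - p' j|)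
            (fun j _ => add_nonneg dist_nonneg (abs_nonneg _)) (Finset.mem_univ i)

open Filter Topology in
set_option maxHeartbeats 1000000 in
/-- Lack of first-order identifiability: if the "gradient + density" linear system at the
atoms of `G₀` has a nonzero solution `(a,b)` and the dominated difference-quotient
condition holds, then `liminf_{G →W₁ G₀} V(p_G, p_{G₀})/D₁(G,G₀) = 0`. -/
theorem stmt_16 {X : Type*} [MeasurableSpace X] (μ : Measure X) [SigmaFinite μ]
    (q k0 : ℕ) (hk0 : 1 ≤ k0)
    (Θ : Set (EuclideanSpace ℝ (Fin q)))
    (f : X → EuclideanSpace ℝ (Fin q) → ℝ)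
    (hfmeas : ∀ ϑ ∈ Θ, Measurable fun x => f x ϑ)
    (hfnn : ∀ ϑ ∈ Θ, ∀ x, 0 ≤ f x ϑ)
    (hfdens : ∀ ϑ ∈ Θ, ∫⁻ x, ENNReal.ofReal (f x ϑ) ∂μ = 1)
    (θ0 : Fin k0 → EuclideanSpace ℝ (Fin q)) (hθ0 : ∀ i, θ0 i ∈ interior Θ)
    (hθ0inj : Function.Injective θ0)
    (p0 : Fin k0 → ℝ) (hp0 : ∀ i, 0 < p0 i ∧ p0 i < 1) (hp0s : ∑ i, p0 i = 1)
    (Nset : Set X) (hNmeas : MeasurableSet Nset) (hNnull : μ Nset = 0)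
    (g : X → Fin k0 → EuclideanSpace ℝ (Fin q))
    (hdiff : ∀ x ∉ Nset, ∀ i, HasGradientAt (fun ϑ => f x ϑ) (g x i) (θ0 i))
    (a : Fin k0 → EuclideanSpace ℝ (Fin q)) (b : Fin k0 → ℝ)
    (hnz : ¬ ∀ i, a i = 0 ∧ b i = 0)
    (hlin : ∀ᵐ x ∂μ, x ∉ Nset →
        ∑ i, ((inner ℝ (a i) (g x i) : ℝ) + b i * f x (θ0 i)) = 0)
    (hdom : ∀ i, ∃ γ > (0 : ℝ), ∃ fbar : X → ℝ, Integrable fbar μ ∧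
        ∀ Δ : ℝ, 0 < Δ → Δ ≤ γ →
          ∀ᵐ x ∂μ, |f x (θ0 i + Δ • a i) - f x (θ0 i)| / Δ ≤ fbar x) :
    ∀ c > (0 : ℝ), ∀ δ > (0 : ℝ),
      ∃ (θ : Fin k0 → EuclideanSpace ℝ (Fin q)) (p : Fin k0 → ℝ),
        (∀ i, θ i ∈ Θ) ∧ Function.Injective θ ∧ (∀ i, 0 < p i) ∧ (∑ i, p i = 1) ∧
        0 < D1dist θ θ0 p p0 ∧ W1dist θ θ0 p p0 < δ ∧
        (1 / 2) * ∫ x, |(∑ i, p i * f x (θ i)) - ∑ i, p0 i * f x (θ0 i)| ∂μ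
          ≤ c * D1dist θ θ0 p p0 := by
  classical
  intro c hc δ hδ
  have hp0pos : ∀ i, 0 < p0 i := fun i => (hp0 i).1
  have hθ0Θ : ∀ i, θ0 i ∈ Θ := fun i => interior_subset (hθ0 i)
  choose γ hγpos fbar hfbarint hfbarbnd using hdom
  have hN : ∀ᵐ x ∂μ, x ∉ Nset := by
    rw [MeasureTheory.ae_iff]
    simpa using hNnull
  have hderae : ∀ i, ∀ᵐ x ∂μ, HasGradientAt (fun ϑ => f x ϑ) (g x i) (θ0 i) := by
    intro i; filter_upwards [hN] with x hx; exact hdiff x hx i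
  have hlin' : ∀ᵐ x ∂μ, ∑ i, ((inner ℝ (a i) (g x i) : ℝ) + b i * f x (θ0 i)) = 0 := by
    filter_upwards [hN, hlin] with x hx h2; exact h2 hx
  have hmemline : ∀ i, ∀ᶠ t in 𝓝[>] (0:ℝ), θ0 i + t • a i ∈ interior Θ := by
    intro i
    have hcont : Tendsto (fun t : ℝ => θ0 i + t • a i) (𝓝 0) (𝓝 (θ0 i)) := by
      have hC : Continuous fun t : ℝ => θ0 i + t • a i :=
        continuous_const.add (continuous_id.smul continuous_const)
      simpa using hC.tendsto 0
    exact Filter.Eventually.filter_mono nhdsWithin_le_nhds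
      (hcont.eventually (isOpen_interior.eventually_mem (hθ0 i)))
  have hfint : ∀ ϑ, ϑ ∈ Θ → Integrable (fun x => f x ϑ) μ := fun ϑ h =>
    (density_int μ _ (hfmeas ϑ h) (hfnn ϑ h) (hfdens ϑ h)).1
  have hgrad : ∀ i : Fin k0, Integrable (fun x => (inner ℝ (a i) (g x i) : ℝ)) μ ∧
      ∫ x, (inner ℝ (a i) (g x i) : ℝ) ∂μ = 0 := fun i =>
    grad_int μ Θ f hfmeas hfnn hfdens (θ0 i) (a i) (hθ0Θ i)
      ((hmemline i).mono fun t ht => interior_subset ht) (fun x => g x i) (hderae i)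
      (γ i) (hγpos i) (fbar i) (hfbarint i) (hfbarbnd i)
  -- sum of b is zero
  have hbsum : ∑ i, b i = 0 := by
    have hint : ∀ i : Fin k0,
        Integrable (fun x => (inner ℝ (a i) (g x i) : ℝ) + b i * f x (θ0 i)) μ :=
      fun i => (hgrad i).1.add ((hfint _ (hθ0Θ i)).const_mul (b i))
    have h1 : ∫ x, ∑ i, ((inner ℝ (a i) (g x i) : ℝ) + b i * f x (θ0 i)) ∂μ = 0 := by
      rw [integral_congr_ae (g := fun _ => (0:ℝ)) (hlin'.mono fun x hx => hx)]
      simp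
    rw [integral_finset_sum _ (fun i _ => hint i)] at h1
    have h2 : ∀ i : Fin k0,
        ∫ x, ((inner ℝ (a i) (g x i) : ℝ) + b i * f x (θ0 i)) ∂μ = b i := by
      intro i
      rw [integral_add (hgrad i).1 ((hfint _ (hθ0Θ i)).const_mul (b i)), (hgrad i).2,
        integral_const_mul,
        (density_int μ _ (hfmeas _ (hθ0Θ i)) (hfnn _ (hθ0Θ i)) (hfdens _ (hθ0Θ i))).2]
      ring
    rw [Finset.sum_congr rfl (fun i _ => h2 i)] at h1
    exact h1
  -- constants
  set C1 : ℝ := ∑ i, (‖a i‖ / p0 i + |b i|) with hC1def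
  have hC1 : 0 < C1 := by
    push_neg at hnz
    obtain ⟨i, hi⟩ := hnz
    refine Finset.sum_pos' (fun j _ =>
      add_nonneg (div_nonneg (norm_nonneg _) (hp0pos j).le) (abs_nonneg _))
      ⟨i, Finset.mem_univ i, ?_⟩
    rcases Classical.em (a i = 0) with h | h
    · have hb : 0 < |b i| := abs_pos.2 (hi h)
      have h2 : 0 ≤ ‖a i‖ / p0 i := div_nonneg (norm_nonneg _) (hp0pos i).le
      linarith
    · have h2 : 0 < ‖a i‖ / p0 i := div_pos (norm_pos_iff.2 h) (hp0pos i)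
      linarith [abs_nonneg (b i)]
  set M : ℝ := 1 + ∑ i, ∑ j, dist (θ0 i) (θ0 j) with hMdef
  have hM0 : 0 ≤ M := by
    have : 0 ≤ ∑ i, ∑ j, dist (θ0 i) (θ0 j) :=
      Finset.sum_nonneg fun i _ => Finset.sum_nonneg fun j _ => dist_nonneg
    simp only [hMdef]; linarith
  set C2 : ℝ := (∑ i, ‖a i‖ / p0 i) + M * ∑ i, |b i| with hC2def
  -- eventualities
  have EvPos : ∀ᶠ Δ in 𝓝[>] (0:ℝ), 0 < Δ := eventually_mem_nhdsWithin
  have Ev1 : ∀ᶠ Δ in 𝓝[>] (0:ℝ), ∀ i, θ0 i + (Δ / p0 i) • a i ∈ interior Θ := by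
    refine eventually_all.2 fun i => ?_
    have hcont : Tendsto (fun Δ : ℝ => θ0 i + (Δ / p0 i) • a i) (𝓝[>] 0) (𝓝 (θ0 i)) := by
      have hC : Continuous fun Δ : ℝ => θ0 i + (Δ / p0 i) • a i :=
        continuous_const.add ((continuous_id.div_const (p0 i)).smul continuous_const)
      have := hC.tendsto 0
      simp only [zero_div, zero_smul, add_zero] at this
      exact this.mono_left nhdsWithin_le_nhds
    exact hcont.eventually (isOpen_interior.eventually_mem (hθ0 i))
  have Ev2 : ∀ᶠ Δ in 𝓝[>] (0:ℝ), ∀ i, 0 < p0 i + Δ * b i := by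
    refine eventually_all.2 fun i => ?_
    have hcont : Tendsto (fun Δ : ℝ => p0 i + Δ * b i) (𝓝[>] 0) (𝓝 (p0 i)) := by
      have hC : Continuous fun Δ : ℝ => p0 i + Δ * b i :=
        continuous_const.add (continuous_id.mul continuous_const)
      have := hC.tendsto 0
      simp only [zero_mul, add_zero] at this
      exact this.mono_left nhdsWithin_le_nhds
    exact hcont.eventually (isOpen_Ioi.eventually_mem (hp0pos i))
  have Ev3 : ∀ᶠ Δ in 𝓝[>] (0:ℝ), ∀ i j, i ≠ j →
      θ0 i + (Δ / p0 i) • a i ≠ θ0 j + (Δ / p0 j) • a j := by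
    refine eventually_all.2 fun i => eventually_all.2 fun j => ?_
    by_cases hij : i = j
    · exact Filter.Eventually.of_forall fun Δ hne => absurd hij hne
    · have hcont : Tendsto (fun Δ : ℝ =>
          dist (θ0 i + (Δ / p0 i) • a i) (θ0 j + (Δ / p0 j) • a j)) (𝓝[>] 0)
          (𝓝 (dist (θ0 i) (θ0 j))) := by
        have hC : Continuous fun Δ : ℝ =>
            dist (θ0 i + (Δ / p0 i) • a i) (θ0 j + (Δ / p0 j) • a j) :=
          Continuous.dist
            (continuous_const.add ((continuous_id.div_const (p0 i)).smul continuous_const))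
            (continuous_const.add ((continuous_id.div_const (p0 j)).smul continuous_const))
        have := hC.tendsto 0
        simp only [zero_div, zero_smul, add_zero] at this
        exact this.mono_left nhdsWithin_le_nhds
      have hpos : dist (θ0 i) (θ0 j) ∈ Set.Ioi (0:ℝ) :=
        dist_pos.2 fun h => hij (hθ0inj h)
      exact (hcont.eventually (isOpen_Ioi.eventually_mem hpos)).mono
        fun Δ h _ => dist_pos.1 h
  have Ev4 : ∀ᶠ Δ in 𝓝[>] (0:ℝ), ∀ i j, j ≠ i →
      Δ * C1 ≤ dist (θ0 j + (Δ / p0 j) • a j) (θ0 i) := by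
    refine eventually_all.2 fun i => eventually_all.2 fun j => ?_
    by_cases hij : j = i
    · exact Filter.Eventually.of_forall fun Δ hne => absurd hij hne
    · have hcont : Tendsto (fun Δ : ℝ =>
          dist (θ0 j + (Δ / p0 j) • a j) (θ0 i) - Δ * C1) (𝓝[>] 0)
          (𝓝 (dist (θ0 j) (θ0 i))) := by
        have hC : Continuous fun Δ : ℝ =>
            dist (θ0 j + (Δ / p0 j) • a j) (θ0 i) - Δ * C1 :=
          (Continuous.dist
            (continuous_const.add ((continuous_id.div_const (p0 j)).smul continuous_const))
            continuous_const).sub (continuous_id.mul continuous_const)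
        have := hC.tendsto 0
        simp only [zero_div, zero_smul, add_zero, zero_mul, sub_zero] at this
        exact this.mono_left nhdsWithin_le_nhds
      have hpos : dist (θ0 j) (θ0 i) ∈ Set.Ioi (0:ℝ) :=
        dist_pos.2 fun h => hij (hθ0inj h)
      exact (hcont.eventually (isOpen_Ioi.eventually_mem hpos)).mono
        fun Δ h _ => by simp only [Set.mem_Ioi] at h; linarith
  have Ev5a : ∀ᶠ Δ in 𝓝[>] (0:ℝ), ∀ i, Δ / p0 i * ‖a i‖ ≤ 1 := by
    refine eventually_all.2 fun i => ?_
    have hcont : Tendsto (fun Δ : ℝ => Δ / p0 i * ‖a i‖) (𝓝[>] 0) (𝓝 0) := by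
      have hC : Continuous fun Δ : ℝ => Δ / p0 i * ‖a i‖ :=
        (continuous_id.div_const (p0 i)).mul continuous_const
      have := hC.tendsto 0
      simp only [zero_div, zero_mul] at this
      exact this.mono_left nhdsWithin_le_nhds
    exact (hcont.eventually (isOpen_Iio.eventually_mem (show (0:ℝ) ∈ Set.Iio 1 by norm_num))).mono
      fun Δ h => le_of_lt h
  have Ev5b : ∀ᶠ Δ in 𝓝[>] (0:ℝ), Δ * C2 < δ := by
    have hcont : Tendsto (fun Δ : ℝ => Δ * C2) (𝓝[>] 0) (𝓝 0) := by
      have hC : Continuous fun Δ : ℝ => Δ * C2 :=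
        continuous_id.mul continuous_const
      have := hC.tendsto 0
      simp only [zero_mul] at this
      exact this.mono_left nhdsWithin_le_nhds
    exact hcont.eventually (isOpen_Iio.eventually_mem (show (0:ℝ) ∈ Set.Iio δ from hδ))
  have Ev6a : ∀ᶠ Δ in 𝓝[>] (0:ℝ), ∀ i, Δ / p0 i ≤ γ i := by
    refine eventually_all.2 fun i => ?_
    have hcont : Tendsto (fun Δ : ℝ => Δ / p0 i) (𝓝[>] 0) (𝓝 0) := by
      have hC : Continuous fun Δ : ℝ => Δ / p0 i :=
        continuous_id.div_const (p0 i)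
      have := hC.tendsto 0
      simp only [zero_div] at this
      exact this.mono_left nhdsWithin_le_nhds
    exact (hcont.eventually (isOpen_Iio.eventually_mem
      (show (0:ℝ) ∈ Set.Iio (γ i) from hγpos i))).mono fun Δ h => le_of_lt h
  have Ev6b : ∀ᶠ Δ in 𝓝[>] (0:ℝ), ∀ i, Δ * |b i| ≤ p0 i := by
    refine eventually_all.2 fun i => ?_
    have hcont : Tendsto (fun Δ : ℝ => Δ * |b i|) (𝓝[>] 0) (𝓝 0) := by
      have hC : Continuous fun Δ : ℝ => Δ * |b i| :=
        continuous_id.mul continuous_const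
      have := hC.tendsto 0
      simp only [zero_mul] at this
      exact this.mono_left nhdsWithin_le_nhds
    exact (hcont.eventually (isOpen_Iio.eventually_mem
      (show (0:ℝ) ∈ Set.Iio (p0 i) from hp0pos i))).mono fun Δ h => le_of_lt h
  -- main dominated convergence
  set S : ℝ → X → ℝ := fun Δ x =>
    (∑ i, (p0 i + Δ * b i) * f x (θ0 i + (Δ / p0 i) • a i)) - ∑ i, p0 i * f x (θ0 i)
    with hSdef
  set bound : X → ℝ := fun x => ∑ i, (2 * fbar i x + |b i| * f x (θ0 i)) with hbdef
  have hboundint : Integrable bound μ := integrable_finset_sum _ fun i _ =>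
    ((hfbarint i).const_mul 2).add ((hfint _ (hθ0Θ i)).const_mul |b i|)
  have hVmeas : ∀ᶠ Δ in 𝓝[>] (0:ℝ), AEStronglyMeasurable (fun x => |S Δ x| / Δ) μ := by
    filter_upwards [Ev1] with Δ hΔ
    have h1 : Measurable (S Δ) := by
      apply Measurable.sub
      · exact Finset.measurable_sum _ fun i _ =>
          (hfmeas _ (interior_subset (hΔ i))).const_mul _
      · exact Finset.measurable_sum _ fun i _ => (hfmeas _ (hθ0Θ i)).const_mul _
    exact (h1.abs.div_const Δ).aestronglyMeasurable
  have hVbnd : ∀ᶠ Δ in 𝓝[>] (0:ℝ), ∀ᵐ x ∂μ, ‖|S Δ x| / Δ‖ ≤ bound x := by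
    filter_upwards [EvPos, Ev6a, Ev6b] with Δ hΔpos h6a h6b
    have hae : ∀ᵐ x ∂μ, ∀ i : Fin k0,
        |f x (θ0 i + (Δ / p0 i) • a i) - f x (θ0 i)| / (Δ / p0 i) ≤ fbar i x :=
      ae_all_iff.2 fun i => hfbarbnd i (Δ / p0 i) (div_pos hΔpos (hp0pos i)) (h6a i)
    filter_upwards [hae] with x hx
    have key : ∀ i : Fin k0,
        |(p0 i + Δ * b i) * f x (θ0 i + (Δ / p0 i) • a i) - p0 i * f x (θ0 i)|
          ≤ Δ * (2 * fbar i x + |b i| * f x (θ0 i)) := by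
      intro i
      set A := f x (θ0 i + (Δ / p0 i) • a i) with hA
      set B := f x (θ0 i) with hB
      have hB0 : 0 ≤ B := hfnn _ (hθ0Θ i) x
      have hquot : |A - B| ≤ fbar i x * (Δ / p0 i) :=
        (div_le_iff₀ (div_pos hΔpos (hp0pos i))).1 (hx i)
      have hfb0 : 0 ≤ fbar i x :=
        le_trans (div_nonneg (abs_nonneg _) (div_pos hΔpos (hp0pos i)).le) (hx i)
      have habs2 : |p0 i + Δ * b i| ≤ 2 * p0 i := by
        calc |p0 i + Δ * b i| ≤ |p0 i| + |Δ * b i| := abs_add_le _ _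
          _ = p0 i + Δ * |b i| := by
            rw [abs_of_pos (hp0pos i), abs_mul, abs_of_pos hΔpos]
          _ ≤ 2 * p0 i := by linarith [h6b i]
      have hstep : |(p0 i + Δ * b i) * A - p0 i * B|
          ≤ |p0 i + Δ * b i| * |A - B| + Δ * |b i| * B := by
        have hid : (p0 i + Δ * b i) * A - p0 i * B
            = (p0 i + Δ * b i) * (A - B) + (Δ * b i) * B := by ring
        rw [hid]
        refine (abs_add_le _ _).trans ?_
        rw [abs_mul, abs_mul (Δ * b i) B, abs_mul Δ (b i), abs_of_pos hΔpos,
          abs_of_nonneg hB0]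
      have hmain : |p0 i + Δ * b i| * |A - B| ≤ 2 * Δ * fbar i x := by
        calc |p0 i + Δ * b i| * |A - B| ≤ (2 * p0 i) * (fbar i x * (Δ / p0 i)) :=
            mul_le_mul habs2 hquot (abs_nonneg _) (by nlinarith [hp0pos i, hΔpos])
          _ = 2 * Δ * fbar i x := by
            have hpne : (p0 i : ℝ) ≠ 0 := (hp0pos i).ne'
            field_simp
      calc |(p0 i + Δ * b i) * A - p0 i * B|
          ≤ |p0 i + Δ * b i| * |A - B| + Δ * |b i| * B := hstep
        _ ≤ 2 * Δ * fbar i x + Δ * |b i| * B := by linarith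
        _ = Δ * (2 * fbar i x + |b i| * B) := by ring
    have hsum : |S Δ x| ≤ Δ * bound x := by
      have h1 : S Δ x = ∑ i, ((p0 i + Δ * b i) * f x (θ0 i + (Δ / p0 i) • a i)
          - p0 i * f x (θ0 i)) := by
        simp only [hSdef, Finset.sum_sub_distrib]
      rw [h1]
      refine (Finset.abs_sum_le_sum_abs _ _).trans ?_
      rw [hbdef, Finset.mul_sum]
      exact Finset.sum_le_sum fun i _ => key i
    rw [Real.norm_eq_abs, abs_of_nonneg (div_nonneg (abs_nonneg _) hΔpos.le),
      div_le_iff₀ hΔpos]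
    linarith [hsum]
  have hVlim : ∀ᵐ x ∂μ, Tendsto (fun Δ => |S Δ x| / Δ) (𝓝[>] (0:ℝ)) (𝓝 0) := by
    filter_upwards [hN, hlin'] with x hx hlx
    have hgr : ∀ i, HasGradientAt (fun ϑ => f x ϑ) (g x i) (θ0 i) := hdiff x hx
    have hterm : ∀ i : Fin k0, Tendsto (fun Δ : ℝ =>
        (p0 i + Δ * b i) * (((f x (θ0 i + (Δ / p0 i) • a i) - f x (θ0 i)) / (Δ / p0 i)) / p0 i)
          + b i * f x (θ0 i)) (𝓝[>] 0)
        (𝓝 ((inner ℝ (a i) (g x i) : ℝ) + b i * f x (θ0 i))) := by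
      intro i
      have hdiv : Tendsto (fun Δ : ℝ => Δ / p0 i) (𝓝[>] 0) (𝓝[>] 0) := by
        rw [tendsto_nhdsWithin_iff]
        constructor
        · have hC : Continuous fun Δ : ℝ => Δ / p0 i :=
            continuous_id.div_const (p0 i)
          have := hC.tendsto 0
          simp only [zero_div] at this
          exact this.mono_left nhdsWithin_le_nhds
        · exact EvPos.mono fun Δ h => div_pos h (hp0pos i)
      have hψ := (dirderiv (fun ϑ => f x ϑ) (g x i) (θ0 i) (a i) (hgr i)).comp hdiv
      have hp : Tendsto (fun Δ : ℝ => p0 i + Δ * b i) (𝓝[>] 0) (𝓝 (p0 i)) := by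
        have hC : Continuous fun Δ : ℝ => p0 i + Δ * b i :=
          continuous_const.add (continuous_id.mul continuous_const)
        have := hC.tendsto 0
        simp only [zero_mul, add_zero] at this
        exact this.mono_left nhdsWithin_le_nhds
      have hcomb := (hp.mul (hψ.div_const (p0 i))).add
        (tendsto_const_nhds (x := b i * f x (θ0 i)) (f := 𝓝[>] (0:ℝ)))
      have heqlim : p0 i * ((inner ℝ (a i) (g x i) : ℝ) / p0 i) + b i * f x (θ0 i)
          = (inner ℝ (a i) (g x i) : ℝ) + b i * f x (θ0 i) := by
        rw [mul_div_cancel₀]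
        exact ne_of_gt (hp0pos i)
      rw [heqlim] at hcomb
      exact hcomb.congr fun Δ => by simp [Function.comp]
    have hsum := tendsto_finset_sum Finset.univ (fun i (_ : i ∈ Finset.univ) => hterm i)
    rw [hlx] at hsum
    have heq : ∀ᶠ Δ in 𝓝[>] (0:ℝ), (∑ i, ((p0 i + Δ * b i) *
        (((f x (θ0 i + (Δ / p0 i) • a i) - f x (θ0 i)) / (Δ / p0 i)) / p0 i)
          + b i * f x (θ0 i))) = S Δ x / Δ := by
      filter_upwards [EvPos] with Δ hΔ
      have hΔne : Δ ≠ 0 := ne_of_gt hΔ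
      have h1 : S Δ x / Δ = ∑ i, ((p0 i + Δ * b i) * f x (θ0 i + (Δ / p0 i) • a i)
          - p0 i * f x (θ0 i)) / Δ := by
        simp only [hSdef, Finset.sum_sub_distrib, ← Finset.sum_div]
      rw [h1]
      refine Finset.sum_congr rfl fun i _ => ?_
      have hpne : p0 i ≠ 0 := ne_of_gt (hp0pos i)
      field_simp
      ring
    have hD : Tendsto (fun Δ => S Δ x / Δ) (𝓝[>] (0:ℝ)) (𝓝 0) := Tendsto.congr' heq hsum
    have habs : Tendsto (fun Δ => |S Δ x / Δ|) (𝓝[>] (0:ℝ)) (𝓝 0) := by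
      have := hD.abs
      simpa using this
    refine habs.congr' ?_
    filter_upwards [EvPos] with Δ hΔ
    rw [abs_div, abs_of_pos hΔ]
  have hDCT := tendsto_integral_filter_of_dominated_convergence (μ := μ)
    (F := fun Δ (x : X) => |S Δ x| / Δ) (f := fun _ => (0:ℝ)) bound
    hVmeas hVbnd hboundint hVlim
  rw [integral_zero] at hDCT
  have Ev7 : ∀ᶠ Δ in 𝓝[>] (0:ℝ), (∫ x, |S Δ x| / Δ ∂μ) < 2 * c * C1 :=
    hDCT.eventually (isOpen_Iio.eventually_mem (show (0:ℝ) ∈ Set.Iio (2 * c * C1) from mul_pos (mul_pos two_pos hc) hC1))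
  -- pick Δ
  obtain ⟨Δ, hΔpos, h1, h2, h3, h4, h5a, h5b, h6a, h6b, h7⟩ :=
    (EvPos.and (Ev1.and (Ev2.and (Ev3.and (Ev4.and (Ev5a.and (Ev5b.and
      (Ev6a.and (Ev6b.and Ev7))))))))).exists
  have hpsum : ∑ i, (p0 i + Δ * b i) = 1 := by
    rw [Finset.sum_add_distrib, hp0s, ← Finset.mul_sum, hbsum, mul_zero, add_zero]
  have hdist_diag : ∀ i, dist (θ0 i + (Δ / p0 i) • a i) (θ0 i) = Δ / p0 i * ‖a i‖ := by
    intro i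
    rw [dist_eq_norm, add_sub_cancel_left, norm_smul, Real.norm_eq_abs,
      abs_of_pos (div_pos hΔpos (hp0pos i))]
  have hD1 : D1dist (fun i => θ0 i + (Δ / p0 i) • a i) θ0 (fun i => p0 i + Δ * b i) p0
      = Δ * C1 := by
    refine D1_eq _ _ _ _ _ ?_ (fun i j hji => h4 i j hji)
    have hterm : ∀ i : Fin k0,
        dist (θ0 i + (Δ / p0 i) • a i) (θ0 i) + |p0 i + Δ * b i - p0 i|
          = Δ * (‖a i‖ / p0 i + |b i|) := by
      intro i
      rw [hdist_diag i, add_sub_cancel_left, abs_mul, abs_of_pos hΔpos]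
      have hpne : (p0 i : ℝ) ≠ 0 := (hp0pos i).ne'
      field_simp
    rw [Finset.sum_congr rfl fun i _ => hterm i, ← Finset.mul_sum, hC1def]
  refine ⟨fun i => θ0 i + (Δ / p0 i) • a i, fun i => p0 i + Δ * b i,
    fun i => interior_subset (h1 i), ?_, h2, hpsum, ?_, ?_, ?_⟩
  · intro i j heq
    by_contra hne
    exact h3 i j hne heq
  · rw [hD1]
    exact mul_pos hΔpos hC1
  · -- W1 bound
    have hMbnd : ∀ i j, dist (θ0 i + (Δ / p0 i) • a i) (θ0 j) ≤ M := by
      intro i j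
      have htr : dist (θ0 i + (Δ / p0 i) • a i) (θ0 j)
          ≤ dist (θ0 i + (Δ / p0 i) • a i) (θ0 i) + dist (θ0 i) (θ0 j) := dist_triangle _ _ _
      have hd1 : dist (θ0 i + (Δ / p0 i) • a i) (θ0 i) ≤ 1 := by
        rw [hdist_diag i]; exact h5a i
      have hd2 : dist (θ0 i) (θ0 j) ≤ ∑ i', ∑ j', dist (θ0 i') (θ0 j') := by
        calc dist (θ0 i) (θ0 j) ≤ ∑ j', dist (θ0 i) (θ0 j') :=
            Finset.single_le_sum (f := fun j' => dist (θ0 i) (θ0 j'))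
              (fun j' _ => dist_nonneg) (Finset.mem_univ j)
          _ ≤ ∑ i', ∑ j', dist (θ0 i') (θ0 j') :=
            Finset.single_le_sum (f := fun i' => ∑ j', dist (θ0 i') (θ0 j'))
              (fun i' _ => Finset.sum_nonneg fun j' _ => dist_nonneg) (Finset.mem_univ i)
      rw [hMdef]
      linarith
    have hW := W1_le (fun i => θ0 i + (Δ / p0 i) • a i) θ0 (fun i => p0 i + Δ * b i) p0
      (fun i => (h2 i).le) (fun i => (hp0pos i).le) hpsum hp0s M hM0 hMbnd
    have hcost : (∑ i, dist (θ0 i + (Δ / p0 i) • a i) (θ0 i))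
        + M * ∑ i, |p0 i + Δ * b i - p0 i| = Δ * C2 := by
      have e1 : ∑ i, dist (θ0 i + (Δ / p0 i) • a i) (θ0 i) = Δ * ∑ i, ‖a i‖ / p0 i := by
        rw [Finset.mul_sum]
        refine Finset.sum_congr rfl fun i _ => ?_
        rw [hdist_diag i, div_mul_eq_mul_div, mul_div_assoc]
      have e2 : ∑ i, |p0 i + Δ * b i - p0 i| = Δ * ∑ i, |b i| := by
        rw [Finset.mul_sum]
        refine Finset.sum_congr rfl fun i _ => ?_
        rw [add_sub_cancel_left, abs_mul, abs_of_pos hΔpos]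
      rw [e1, e2, hC2def]
      ring
    calc W1dist (fun i => θ0 i + (Δ / p0 i) • a i) θ0 (fun i => p0 i + Δ * b i) p0
        ≤ (∑ i, dist (θ0 i + (Δ / p0 i) • a i) (θ0 i))
            + M * ∑ i, |p0 i + Δ * b i - p0 i| := hW
      _ = Δ * C2 := hcost
      _ < δ := h5b
  · -- final variational bound
    rw [hD1]
    have h8 : ∫ x, |S Δ x| / Δ ∂μ = (∫ x, |S Δ x| ∂μ) / Δ := integral_div Δ _
    rw [h8, div_lt_iff₀ hΔpos] at h7
    have hgoal : (1 / 2 : ℝ) * ∫ x, |S Δ x| ∂μ ≤ c * (Δ * C1) := by nlinarith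
    exact hgoal
end
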